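/- Let β ∈ (0,1) and suppose there exists δ > 0 such that ∫_0^∞ s^{β+δ} φ(s) ds < ∞. Then liminf_{T→∞} T^{−min(β+δ,1)} I_R(T) > 0. -/

import Mathlib

set_option autoImplicit false

open MeasureTheory Filter Set
open scoped ENNReal

/-- `convIter φ k` is the `(k+1)`-fold convolution `φ^{*(k+1)}` of `φ`. -/
noncomputable def convIter (φ : ℝ → ℝ) : ℕ → ℝ → ℝ
  | 0 => φ
  | n + 1 => fun x => ∫ s, convIter φ n s * φ (x - s)

lemma conv_lintegral (A B : ℝ → ℝ≥0∞) (hA : Measurable A) (hB : Measurable B) :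
    ∫⁻ x, ∫⁻ s, A s * B (x - s) = (∫⁻ s, A s) * (∫⁻ x, B x) := by
  rw [lintegral_lintegral_swap
    (((hA.comp measurable_snd).mul (hB.comp (measurable_fst.sub measurable_snd))).aemeasurable)]
  have h : ∀ s : ℝ, ∫⁻ x, A s * B (x - s) = A s * ∫⁻ x, B x := by
    intro s
    rw [lintegral_const_mul (A s)
        (show Measurable fun x : ℝ => B (x - s) from hB.comp (measurable_sub_const s)),
      lintegral_sub_right_eq_self B s]
  simp_rw [h]
  rw [lintegral_mul_const _ hA]

lemma convIter_meas (φ : ℝ → ℝ) (hφ : Measurable φ) : ∀ k, Measurable (convIter φ k)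
  | 0 => hφ
  | (n+1) => by
    have h := convIter_meas φ hφ n
    have hsm : StronglyMeasurable fun p : ℝ × ℝ => convIter φ n p.2 * φ (p.1 - p.2) :=
      ((h.comp measurable_snd).mul (hφ.comp (measurable_fst.sub measurable_snd))).stronglyMeasurable
    exact hsm.integral_prod_right'.measurable

lemma convIter_nonneg (φ : ℝ → ℝ) (h : ∀ t, 0 ≤ φ t) : ∀ k x, 0 ≤ convIter φ k x
  | 0, x => h x
  | (n+1), x => integral_nonneg fun s => mul_nonneg (convIter_nonneg φ h n s) (h _)

lemma convIter_zero (φ : ℝ → ℝ) (hz : ∀ t < 0, φ t = 0) :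
    ∀ k, ∀ x < 0, convIter φ k x = 0
  | 0, x, hx => hz x hx
  | (n+1), x, hx => by
    show ∫ s, convIter φ n s * φ (x - s) = 0
    have h : ∀ s, convIter φ n s * φ (x - s) = 0 := by
      intro s
      rcases lt_or_ge s 0 with h | h
      · rw [convIter_zero φ hz n s h, zero_mul]
      · rw [hz (x - s) (by linarith), mul_zero]
    simp [h]

lemma convIter_ae (φ : ℝ → ℝ) (hm : Measurable φ) (hnn : ∀ t, 0 ≤ φ t)
    (h1 : ∫⁻ x, ENNReal.ofReal (φ x) = 1) (k : ℕ)
    (hk : ∫⁻ x, ENNReal.ofReal (convIter φ k x) = 1) :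
    (fun x => ENNReal.ofReal (convIter φ (k+1) x)) =ᵐ[volume]
      (fun x => ∫⁻ s, ENNReal.ofReal (convIter φ k s) * ENNReal.ofReal (φ (x - s))) := by
  have hmk := convIter_meas φ hm k
  have hmeasF : Measurable fun x : ℝ =>
      ∫⁻ s, ENNReal.ofReal (convIter φ k s) * ENNReal.ofReal (φ (x - s)) := by
    apply Measurable.lintegral_prod_right
    exact ((hmk.ennreal_ofReal).comp measurable_snd).mul
      ((hm.ennreal_ofReal).comp (measurable_fst.sub measurable_snd))
  have htot : ∫⁻ x, ∫⁻ s, ENNReal.ofReal (convIter φ k s) * ENNReal.ofReal (φ (x - s)) = 1 := by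
    rw [conv_lintegral _ _ (hmk.ennreal_ofReal)
      (hm.ennreal_ofReal), hk, h1, one_mul]
  have hfin : ∀ᵐ x : ℝ,
      (∫⁻ s, ENNReal.ofReal (convIter φ k s) * ENNReal.ofReal (φ (x - s))) < ⊤ :=
    ae_lt_top hmeasF (by rw [htot]; exact ENNReal.one_ne_top)
  filter_upwards [hfin] with x hx
  have hg : ∀ s, ENNReal.ofReal (convIter φ k s * φ (x - s))
      = ENNReal.ofReal (convIter φ k s) * ENNReal.ofReal (φ (x - s)) :=
    fun s => ENNReal.ofReal_mul (convIter_nonneg φ hnn k s)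
  show ENNReal.ofReal (∫ s, convIter φ k s * φ (x - s)) = _
  rw [integral_eq_lintegral_of_nonneg_ae
      (ae_of_all _ fun s => mul_nonneg (convIter_nonneg φ hnn k s) (hnn _))
      (Measurable.aestronglyMeasurable (show Measurable fun s : ℝ => convIter φ k s * φ (x - s)
        from hmk.mul (hm.comp (measurable_const.sub measurable_id))))]
  simp_rw [hg]
  exact ENNReal.ofReal_toReal hx.ne

lemma convIter_mass (φ : ℝ → ℝ) (hm : Measurable φ) (hnn : ∀ t, 0 ≤ φ t)
    (h1 : ∫⁻ x, ENNReal.ofReal (φ x) = 1) :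
    ∀ k, ∫⁻ x, ENNReal.ofReal (convIter φ k x) = 1
  | 0 => h1
  | (k+1) => by
    rw [lintegral_congr_ae (convIter_ae φ hm hnn h1 k (convIter_mass φ hm hnn h1 k)),
      conv_lintegral _ _ ((convIter_meas φ hm k).ennreal_ofReal)
        (hm.ennreal_ofReal),
      convIter_mass φ hm hnn h1 k, h1, one_mul]

lemma measurable_w (α : ℝ) : Measurable fun x : ℝ => (ENNReal.ofReal x) ^ α :=
  ENNReal.continuous_rpow_const.measurable.comp measurable_id.ennreal_ofReal

lemma convIter_moment_succ (φ : ℝ → ℝ) (hm : Measurable φ) (hnn : ∀ t, 0 ≤ φ t)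
    (hz : ∀ t < 0, φ t = 0) (h1 : ∫⁻ x, ENNReal.ofReal (φ x) = 1)
    (α : ℝ) (hα0 : 0 ≤ α) (hα1 : α ≤ 1) (k : ℕ) :
    ∫⁻ x, (ENNReal.ofReal x) ^ α * ENNReal.ofReal (convIter φ (k+1) x)
      ≤ (∫⁻ x, (ENNReal.ofReal x) ^ α * ENNReal.ofReal (convIter φ k x))
        + ∫⁻ x, (ENNReal.ofReal x) ^ α * ENNReal.ofReal (φ x) := by
  have hmk := convIter_meas φ hm k
  have hae := convIter_ae φ hm hnn h1 k (convIter_mass φ hm hnn h1 k)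
  have hstep1 : ∫⁻ x, (ENNReal.ofReal x) ^ α * ENNReal.ofReal (convIter φ (k+1) x)
      = ∫⁻ x, (ENNReal.ofReal x) ^ α
          * ∫⁻ s, ENNReal.ofReal (convIter φ k s) * ENNReal.ofReal (φ (x - s)) := by
    apply lintegral_congr_ae
    filter_upwards [hae] with x hx
    rw [hx]
  rw [hstep1]
  have hswap : ∀ x : ℝ, (ENNReal.ofReal x) ^ α
        * ∫⁻ s, ENNReal.ofReal (convIter φ k s) * ENNReal.ofReal (φ (x - s))
      = ∫⁻ s, (ENNReal.ofReal x) ^ α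
          * (ENNReal.ofReal (convIter φ k s) * ENNReal.ofReal (φ (x - s))) := by
    intro x
    rw [lintegral_const_mul ((ENNReal.ofReal x) ^ α)
      (show Measurable fun s : ℝ =>
          ENNReal.ofReal (convIter φ k s) * ENNReal.ofReal (φ (x - s)) from
        hmk.ennreal_ofReal.mul
          ((hm.comp (measurable_const.sub measurable_id)).ennreal_ofReal))]
  simp_rw [hswap]
  have hptwise : ∀ x s : ℝ,
      (ENNReal.ofReal x) ^ α
          * (ENNReal.ofReal (convIter φ k s) * ENNReal.ofReal (φ (x - s)))
      ≤ ((ENNReal.ofReal s) ^ α + (ENNReal.ofReal (x - s)) ^ α)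
          * (ENNReal.ofReal (convIter φ k s) * ENNReal.ofReal (φ (x - s))) := by
    intro x s
    by_cases hfs : convIter φ k s = 0
    · simp [hfs]
    by_cases hps : φ (x - s) = 0
    · simp [hps]
    have hs0 : 0 ≤ s := by
      by_contra h
      exact hfs (convIter_zero φ hz k s (not_le.mp h))
    have hxs0 : 0 ≤ x - s := by
      by_contra h
      exact hps (hz _ (not_le.mp h))
    have hx_eq : ENNReal.ofReal x = ENNReal.ofReal s + ENNReal.ofReal (x - s) := by
      rw [← ENNReal.ofReal_add hs0 hxs0]
      ring_nf
    apply mul_le_mul_left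
    rw [hx_eq]
    exact ENNReal.rpow_add_le_add_rpow _ _ hα0 hα1
  calc ∫⁻ x, ∫⁻ s, (ENNReal.ofReal x) ^ α
          * (ENNReal.ofReal (convIter φ k s) * ENNReal.ofReal (φ (x - s)))
      ≤ ∫⁻ x, ∫⁻ s, ((ENNReal.ofReal s) ^ α + (ENNReal.ofReal (x - s)) ^ α)
          * (ENNReal.ofReal (convIter φ k s) * ENNReal.ofReal (φ (x - s))) := by
        apply lintegral_mono
        intro x
        exact lintegral_mono fun s => hptwise x s
    _ = (∫⁻ x, ∫⁻ s, ((ENNReal.ofReal s) ^ α * ENNReal.ofReal (convIter φ k s))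
            * ENNReal.ofReal (φ (x - s)))
        + ∫⁻ x, ∫⁻ s, ENNReal.ofReal (convIter φ k s)
            * ((ENNReal.ofReal (x - s)) ^ α * ENNReal.ofReal (φ (x - s))) := by
        rw [← lintegral_add_left]
        · apply lintegral_congr
          intro x
          rw [← lintegral_add_left]
          · apply lintegral_congr
            intro s
            ring
          · exact ((measurable_w α).mul hmk.ennreal_ofReal).mul
              ((hm.comp (measurable_const.sub measurable_id)).ennreal_ofReal)
        · apply Measurable.lintegral_prod_right
          exact (((measurable_w α).comp measurable_snd).mul
              ((hmk.ennreal_ofReal).comp measurable_snd)).mul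
            ((hm.ennreal_ofReal).comp (measurable_fst.sub measurable_snd))
    _ ≤ (∫⁻ x, (ENNReal.ofReal x) ^ α * ENNReal.ofReal (convIter φ k x))
        + ∫⁻ x, (ENNReal.ofReal x) ^ α * ENNReal.ofReal (φ x) := by
        apply add_le_add
        · rw [conv_lintegral (fun s => ENNReal.ofReal s ^ α * ENNReal.ofReal (convIter φ k s)) _ ((measurable_w α).mul hmk.ennreal_ofReal) hm.ennreal_ofReal,
            h1, mul_one]
        · rw [conv_lintegral _ (fun x => ENNReal.ofReal x ^ α * ENNReal.ofReal (φ x)) hmk.ennreal_ofReal ((measurable_w α).mul hm.ennreal_ofReal),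
            convIter_mass φ hm hnn h1 k, one_mul]

lemma convIter_moment (φ : ℝ → ℝ) (hm : Measurable φ) (hnn : ∀ t, 0 ≤ φ t)
    (hz : ∀ t < 0, φ t = 0) (h1 : ∫⁻ x, ENNReal.ofReal (φ x) = 1)
    (α : ℝ) (hα0 : 0 ≤ α) (hα1 : α ≤ 1) :
    ∀ k : ℕ, ∫⁻ x, (ENNReal.ofReal x) ^ α * ENNReal.ofReal (convIter φ k x)
      ≤ (k + 1) * ∫⁻ x, (ENNReal.ofReal x) ^ α * ENNReal.ofReal (φ x)
  | 0 => by simp [convIter]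
  | (k+1) => by
    calc ∫⁻ x, (ENNReal.ofReal x) ^ α * ENNReal.ofReal (convIter φ (k+1) x)
        ≤ (∫⁻ x, (ENNReal.ofReal x) ^ α * ENNReal.ofReal (convIter φ k x))
            + ∫⁻ x, (ENNReal.ofReal x) ^ α * ENNReal.ofReal (φ x) :=
          convIter_moment_succ φ hm hnn hz h1 α hα0 hα1 k
      _ ≤ (k + 1) * (∫⁻ x, (ENNReal.ofReal x) ^ α * ENNReal.ofReal (φ x))
            + 1 * ∫⁻ x, (ENNReal.ofReal x) ^ α * ENNReal.ofReal (φ x) := by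
          rw [one_mul]
          exact add_le_add (convIter_moment φ hm hnn hz h1 α hα0 hα1 k) le_rfl
      _ = ((k : ℝ≥0∞) + 1 + 1) * ∫⁻ x, (ENNReal.ofReal x) ^ α * ENNReal.ofReal (φ x) := by
          rw [← add_mul]
      _ = ((k : ℕ) + 1 + 1 : ℝ≥0∞) * ∫⁻ x, (ENNReal.ofReal x) ^ α * ENNReal.ofReal (φ x) := by
          norm_num
      _ = (((k+1 : ℕ) : ℝ≥0∞) + 1) * ∫⁻ x, (ENNReal.ofReal x) ^ α * ENNReal.ofReal (φ x) := by
          push_cast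
          ring_nf

lemma lintegral_eq_Ioi (g : ℝ → ℝ≥0∞) (hg : ∀ x < 0, g x = 0) :
    ∫⁻ x, g x = ∫⁻ x in Ioi (0:ℝ), g x := by
  rw [← lintegral_add_compl g (measurableSet_Ioi (a := (0:ℝ)))]
  have h0 : ∫⁻ x in (Ioi (0:ℝ))ᶜ, g x = 0 := by
    rw [compl_Ioi, setLIntegral_congr (Iio_ae_eq_Iic (a := (0:ℝ))).symm,
      setLIntegral_congr_fun measurableSet_Iio
        (fun x (hx : x < 0) => hg x hx)]
    simp
  rw [h0, add_zero]

lemma convIter_markov (φ : ℝ → ℝ) (hm : Measurable φ) (hnn : ∀ t, 0 ≤ φ t)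
    (hz : ∀ t < 0, φ t = 0) (h1 : ∫⁻ x, ENNReal.ofReal (φ x) = 1)
    (α : ℝ) (hα0 : 0 < α) (hα1 : α ≤ 1) (k : ℕ) (T : ℝ) (hT : 0 < T) :
    ENNReal.ofReal (T ^ α) * ∫⁻ x in Ioi T, ENNReal.ofReal (convIter φ k x)
      ≤ ((k : ℝ≥0∞) + 1) * ∫⁻ x, (ENNReal.ofReal x) ^ α * ENNReal.ofReal (φ x) := by
  have hmk := convIter_meas φ hm k
  calc ENNReal.ofReal (T ^ α) * ∫⁻ x in Ioi T, ENNReal.ofReal (convIter φ k x)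
      = ∫⁻ x in Ioi T, (ENNReal.ofReal T) ^ α * ENNReal.ofReal (convIter φ k x) := by
        rw [lintegral_const_mul ((ENNReal.ofReal T) ^ α) hmk.ennreal_ofReal,
          ENNReal.ofReal_rpow_of_pos hT]
    _ ≤ ∫⁻ x in Ioi T, (ENNReal.ofReal x) ^ α * ENNReal.ofReal (convIter φ k x) := by
        apply setLIntegral_mono ((measurable_w α).mul hmk.ennreal_ofReal)
        intro x hx
        exact mul_le_mul_left
          (ENNReal.rpow_le_rpow (ENNReal.ofReal_le_ofReal (le_of_lt hx)) hα0.le) _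
    _ ≤ ∫⁻ x, (ENNReal.ofReal x) ^ α * ENNReal.ofReal (convIter φ k x) :=
        setLIntegral_le_lintegral _ _
    _ ≤ _ := convIter_moment φ hm hnn hz h1 α hα0.le hα1 k

/-- `IR φ T = ∑_{k=1}^∞ ∫_0^T φ^{*k}(s) ds`, valued in `[0,∞]`. -/
noncomputable def IR (φ : ℝ → ℝ) (T : ℝ) : ENNReal :=
  ∑' k : ℕ, ∫⁻ s in Set.Ioc (0 : ℝ) T, ENNReal.ofReal (convIter φ k s)

/-- if `∫_0^∞ s^{β+δ} φ(s) ds < ∞` for some `δ > 0`, then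
`liminf_{T→∞} T^{-min(β+δ,1)} I_R(T) > 0`. -/
theorem stmt4
    (φ : ℝ → ℝ) (hφ_meas : Measurable φ) (hφ_nonneg : ∀ t, 0 ≤ φ t)
    (hφ_zero : ∀ t < 0, φ t = 0)
    (hφ_int : ∫ t in Set.Ioi (0 : ℝ), φ t = 1)
    (β δ : ℝ) (hβ : β ∈ Ioo (0 : ℝ) 1) (hδ : 0 < δ)
    (hmom : ∫⁻ s in Set.Ioi (0 : ℝ), ENNReal.ofReal (s ^ (β + δ) * φ s) < ⊤) :
    0 < Filter.liminf
      (fun T : ℝ => IR φ T / ENNReal.ofReal (T ^ min (β + δ) 1)) atTop := by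
  obtain ⟨hβ0, hβ1⟩ := hβ
  set α := min (β + δ) 1 with hα_def
  have hα0 : 0 < α := lt_min (by linarith) one_pos
  have hα1 : α ≤ 1 := min_le_right _ _
  have hαle : α ≤ β + δ := min_le_left _ _
  -- total mass one
  have hInt : IntegrableOn φ (Ioi (0:ℝ)) := by
    by_contra h
    rw [integral_undef h] at hφ_int
    norm_num at hφ_int
  have h1Ioi : ∫⁻ x in Ioi (0:ℝ), ENNReal.ofReal (φ x) = 1 := by
    rw [← ofReal_integral_eq_lintegral_ofReal hInt (ae_of_all _ fun x => hφ_nonneg x),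
      hφ_int, ENNReal.ofReal_one]
  have h1 : ∫⁻ x, ENNReal.ofReal (φ x) = 1 := by
    rw [lintegral_eq_Ioi _ (fun x hx => by rw [hφ_zero x hx, ENNReal.ofReal_zero])]
    exact h1Ioi
  -- the α-moment of φ
  set mα := ∫⁻ x, (ENNReal.ofReal x) ^ α * ENNReal.ofReal (φ x) with hmα_def
  have hmα_Ioi : mα = ∫⁻ x in Ioi (0:ℝ), (ENNReal.ofReal x) ^ α * ENNReal.ofReal (φ x) := by
    apply lintegral_eq_Ioi
    intro x hx
    rw [ENNReal.ofReal_of_nonpos hx.le, ENNReal.zero_rpow_of_pos hα0, zero_mul]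
  have hmα_ne_top : mα ≠ ⊤ := by
    have hb : mα ≤ ∫⁻ x in Ioi (0:ℝ),
        (ENNReal.ofReal (φ x) + ENNReal.ofReal (x ^ (β+δ) * φ x)) := by
      rw [hmα_Ioi]
      apply setLIntegral_mono
      · exact hφ_meas.ennreal_ofReal.add
          (Measurable.ennreal_ofReal (by fun_prop))
      · intro x hx
        have hx0 : (0:ℝ) < x := hx
        rw [ENNReal.ofReal_rpow_of_pos hx0,
          ← ENNReal.ofReal_mul (Real.rpow_nonneg hx0.le _),
          ← ENNReal.ofReal_add (hφ_nonneg x)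
            (mul_nonneg (Real.rpow_nonneg hx0.le _) (hφ_nonneg x))]
        apply ENNReal.ofReal_le_ofReal
        have hpow : x ^ α ≤ 1 + x ^ (β + δ) := by
          rcases le_total x 1 with hx1 | hx1
          · have := Real.rpow_le_one hx0.le hx1 hα0.le
            have := Real.rpow_nonneg hx0.le (β + δ)
            linarith
          · have := Real.rpow_le_rpow_of_exponent_le hx1 hαle
            linarith
        nlinarith [hφ_nonneg x]
    have hfin : (∫⁻ x in Ioi (0:ℝ),
        (ENNReal.ofReal (φ x) + ENNReal.ofReal (x ^ (β+δ) * φ x))) ≠ ⊤ := by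
      rw [lintegral_add_left hφ_meas.ennreal_ofReal, h1Ioi]
      exact ENNReal.add_ne_top.2 ⟨ENNReal.one_ne_top, hmom.ne⟩
    exact ne_top_of_le_ne_top hfin hb
  set C : ℝ := mα.toReal + 1 with hC_def
  have hC : 0 < C := by positivity
  have hmαC : mα ≤ ENNReal.ofReal C := by
    rw [← ENNReal.ofReal_toReal hmα_ne_top]
    exact ENNReal.ofReal_le_ofReal (by simp [hC_def])
  -- mass of convolutions on Ioi 0
  have hmassIoi : ∀ k, ∫⁻ x in Ioi (0:ℝ), ENNReal.ofReal (convIter φ k x) = 1 := by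
    intro k
    rw [← lintegral_eq_Ioi _
      (fun x hx => by rw [convIter_zero φ hφ_zero k x hx, ENNReal.ofReal_zero])]
    exact convIter_mass φ hφ_meas hφ_nonneg h1 k
  -- tail bound
  have htail : ∀ (k : ℕ) (T : ℝ), 0 < T →
      ∫⁻ x in Ioi T, ENNReal.ofReal (convIter φ k x)
        ≤ ENNReal.ofReal (((k:ℝ)+1) * C / T ^ α) := by
    intro k T hT
    have hTα : (0:ℝ) < T ^ α := Real.rpow_pos_of_pos hT α
    have hcast : ((k:ℝ≥0∞)+1) * ENNReal.ofReal C = ENNReal.ofReal (((k:ℝ)+1)*C) := by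
      rw [ENNReal.ofReal_mul (by positivity)]
      congr 1
      rw [ENNReal.ofReal_add (by positivity) zero_le_one, ENNReal.ofReal_natCast,
        ENNReal.ofReal_one]
    have h := convIter_markov φ hφ_meas hφ_nonneg hφ_zero h1 α hα0 hα1 k T hT
    rw [ENNReal.ofReal_div_of_pos hTα]
    rw [ENNReal.le_div_iff_mul_le
      (Or.inl (ne_of_gt (ENNReal.ofReal_pos.2 hTα))) (Or.inl ENNReal.ofReal_ne_top)]
    calc (∫⁻ x in Ioi T, ENNReal.ofReal (convIter φ k x)) * ENNReal.ofReal (T ^ α)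
        = ENNReal.ofReal (T ^ α) * ∫⁻ x in Ioi T, ENNReal.ofReal (convIter φ k x) :=
          mul_comm _ _
      _ ≤ ((k:ℝ≥0∞)+1) * mα := h
      _ ≤ ((k:ℝ≥0∞)+1) * ENNReal.ofReal C := mul_le_mul_right hmαC _
      _ = ENNReal.ofReal (((k:ℝ)+1)*C) := hcast
  -- main eventual bound
  have key : ∀ T : ℝ, max 1 ((4*C) ^ α⁻¹) ≤ T →
      ENNReal.ofReal (1/(8*C)) ≤ IR φ T / ENNReal.ofReal (T ^ α) := by
    intro T hTm
    have hT1 : (1:ℝ) ≤ T := le_trans (le_max_left _ _) hTm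
    have hT0 : (0:ℝ) < T := by linarith
    have ht0 : (0:ℝ) < T ^ α := Real.rpow_pos_of_pos hT0 α
    have h4C : (0:ℝ) ≤ 4*C := by positivity
    have ht4C : 4*C ≤ T ^ α := by
      calc 4*C = ((4*C) ^ α⁻¹) ^ α := by
            rw [← Real.rpow_mul h4C, inv_mul_cancel₀ hα0.ne', Real.rpow_one]
        _ ≤ T ^ α := Real.rpow_le_rpow (Real.rpow_nonneg h4C _)
            (le_trans (le_max_right _ _) hTm) hα0.le
    set t := T ^ α with ht_def
    set N := ⌊t/(2*C)⌋₊ with hN_def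
    have hNle : (N:ℝ) ≤ t/(2*C) := Nat.floor_le (by positivity)
    have hu1 : (1:ℝ) ≤ t/(4*C) := by
      rw [le_div_iff₀ (by positivity)]
      linarith
    have hNge : t/(4*C) ≤ (N:ℝ) := by
      have h2 : t/(2*C) < N + 1 := Nat.lt_floor_add_one _
      have h3 : t/(2*C) = t/(4*C) + t/(4*C) := by field_simp; ring
      linarith
    have h12 : (1:ℝ≥0∞) - ENNReal.ofReal (1/2) = ENNReal.ofReal (1/2) := by
      rw [← ENNReal.ofReal_one, ← ENNReal.ofReal_sub _ (by norm_num : (0:ℝ) ≤ 1/2)]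
      norm_num
    have hterm : ∀ k < N, ENNReal.ofReal (1/2)
        ≤ ∫⁻ x in Ioc (0:ℝ) T, ENNReal.ofReal (convIter φ k x) := by
      intro k hk
      have hkN : (k:ℝ) + 1 ≤ N := by exact_mod_cast Nat.succ_le_of_lt hk
      have hNt : (N:ℝ) * (2*C) ≤ t := by
        rw [← le_div_iff₀ (by positivity : (0:ℝ) < 2*C)]
        exact hNle
      have hhalf : ((k:ℝ)+1) * C / t ≤ 1/2 := by
        rw [div_le_iff₀ ht0]
        nlinarith [mul_le_mul_of_nonneg_right hkN hC.le]
      have htail2 : ∫⁻ x in Ioi T, ENNReal.ofReal (convIter φ k x)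
          ≤ ENNReal.ofReal (1/2) :=
        le_trans (htail k T hT0) (ENNReal.ofReal_le_ofReal hhalf)
      have hsplit : (∫⁻ x in Ioc (0:ℝ) T, ENNReal.ofReal (convIter φ k x))
          + ∫⁻ x in Ioi T, ENNReal.ofReal (convIter φ k x) = 1 := by
        rw [← lintegral_union measurableSet_Ioi (Ioc_disjoint_Ioi le_rfl),
          Ioc_union_Ioi_eq_Ioi hT0.le]
        exact hmassIoi k
      calc ENNReal.ofReal (1/2) = 1 - ENNReal.ofReal (1/2) := h12.symm
        _ ≤ 1 - ∫⁻ x in Ioi T, ENNReal.ofReal (convIter φ k x) :=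
            tsub_le_tsub_left htail2 1
        _ ≤ ∫⁻ x in Ioc (0:ℝ) T, ENNReal.ofReal (convIter φ k x) := by
            rw [tsub_le_iff_right]
            exact le_of_eq hsplit.symm
    have hsum : (N : ℝ≥0∞) * ENNReal.ofReal (1/2) ≤ IR φ T := by
      calc (N:ℝ≥0∞) * ENNReal.ofReal (1/2)
          = ∑ _k ∈ Finset.range N, ENNReal.ofReal (1/2) := by
            rw [Finset.sum_const, Finset.card_range, nsmul_eq_mul]
        _ ≤ ∑ k ∈ Finset.range N,
            ∫⁻ x in Ioc (0:ℝ) T, ENNReal.ofReal (convIter φ k x) :=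
            Finset.sum_le_sum fun k hk => hterm k (Finset.mem_range.1 hk)
        _ ≤ IR φ T := ENNReal.sum_le_tsum _
    have hNcast : ENNReal.ofReal (t/(4*C)) ≤ (N:ℝ≥0∞) := by
      rw [← ENNReal.ofReal_natCast]
      exact ENNReal.ofReal_le_ofReal hNge
    have hIR : ENNReal.ofReal (t/(8*C)) ≤ IR φ T := by
      calc ENNReal.ofReal (t/(8*C))
          = ENNReal.ofReal (t/(4*C)) * ENNReal.ofReal (1/2) := by
            rw [← ENNReal.ofReal_mul (by positivity)]
            congr 1
            rw [div_mul_div_comm, mul_one, show (4*C)*(2:ℝ) = 8*C by ring]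
        _ ≤ (N:ℝ≥0∞) * ENNReal.ofReal (1/2) := mul_le_mul_left hNcast _
        _ ≤ IR φ T := hsum
    calc ENNReal.ofReal (1/(8*C))
        = ENNReal.ofReal (t/(8*C)) / ENNReal.ofReal t := by
          rw [← ENNReal.ofReal_div_of_pos ht0]
          congr 1
          rw [div_right_comm, div_self ht0.ne']
        _ ≤ IR φ T / ENNReal.ofReal t := ENNReal.div_le_div_right hIR _
  have hpos : (0:ℝ≥0∞) < ENNReal.ofReal (1/(8*C)) := ENNReal.ofReal_pos.2 (by positivity)
  refine lt_of_lt_of_le hpos (le_liminf_of_le (by isBoundedDefault) ?_)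
  filter_upwards [eventually_ge_atTop (max 1 ((4*C) ^ α⁻¹))] with T hT using key T hT
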